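/- Let I ⊆ [0,1] be a set of real numbers and let c ≥ 0 be a real number. Then D(D(I) ∪ D_c(I)) ⊆ D(I) ∪ D_c(I) ∪ {1}. -/

import Mathlib

open Finset in
/-- `I_+`: sums `∑ nᵢ aᵢ ≤ 1` with `aᵢ ∈ I`, `nᵢ` positive integers, together with `0`. -/
def Iplus (I : Set ℝ) : Set ℝ :=
  {x : ℝ | x ≤ 1 ∧ ∃ (r : ℕ), 0 < r ∧ ∃ (a : Fin r → ℝ) (n : Fin r → ℕ),
    (∀ i, a i ∈ I) ∧ (∀ i, 0 < n i) ∧ x = ∑ i, (n i : ℝ) * a i} ∪ {0}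

/-- `D(I) = {(m-1+f)/m ≤ 1 : m ∈ ℕ₊, f ∈ I_+}`. -/
def Dset (I : Set ℝ) : Set ℝ :=
  {x : ℝ | ∃ (m : ℕ) (f : ℝ), 0 < m ∧ f ∈ Iplus I ∧ x = ((m : ℝ) - 1 + f) / m} ∩ Set.Iic 1

/-- `D_c(I) = {(m-1+f+kc)/m ≤ 1 : m, k ∈ ℕ₊, f ∈ I_+}`. -/
def Dc (c : ℝ) (I : Set ℝ) : Set ℝ :=
  {x : ℝ | ∃ (m k : ℕ) (f : ℝ), 0 < m ∧ 0 < k ∧ f ∈ Iplus I ∧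
    x = ((m : ℝ) - 1 + f + (k : ℝ) * c) / m} ∩ Set.Iic 1

lemma iplus_eq (I : Set ℝ) : Iplus I = ↑(AddSubmonoid.closure I) ∩ Set.Iic 1 := by
  ext x
  constructor
  · rintro (⟨hx1, r, hr, a, n, ha, hn, rfl⟩ | rfl)
    · refine ⟨AddSubmonoid.sum_mem _ fun i _ => ?_, hx1⟩
      have h := AddSubmonoid.nsmul_mem _ (AddSubmonoid.subset_closure (ha i)) (n i)
      rwa [nsmul_eq_mul] at h
    · exact ⟨AddSubmonoid.zero_mem _, by norm_num⟩
  · rintro ⟨hx, hx1⟩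
    obtain ⟨l, hl, rfl⟩ := AddSubmonoid.exists_list_of_mem_closure hx
    rcases eq_or_ne l [] with rfl | hne
    · exact Or.inr rfl
    · refine Or.inl ⟨hx1, l.length, List.length_pos_iff.mpr hne, fun i => l[(i : ℕ)], fun _ => 1,
        ?_, ?_, ?_⟩
      · exact fun i => hl _ (l.getElem_mem i.2)
      · exact fun _ => one_pos
      · simp

lemma closure_nonneg {I : Set ℝ} (hI : ∀ x ∈ I, 0 ≤ x) {x : ℝ}
    (hx : x ∈ AddSubmonoid.closure I) : 0 ≤ x := by
  induction hx using AddSubmonoid.closure_induction with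
  | mem y hy => exact hI y hy
  | zero => exact le_refl 0
  | add a b _ _ ha hb => exact add_nonneg ha hb

lemma mem_DJ_nonneg {I : Set ℝ} (hI : I ⊆ Set.Icc 0 1) {c : ℝ} (hc : 0 ≤ c) {x : ℝ}
    (hx : x ∈ Dset I ∪ Dc c I) : 0 ≤ x := by
  have hnn : ∀ f ∈ Iplus I, 0 ≤ f := by
    intro f hf
    rw [iplus_eq] at hf
    exact closure_nonneg (fun y hy => (hI hy).1) hf.1
  rcases hx with ⟨⟨m, f, hm, hf, rfl⟩, -⟩ | ⟨⟨m, k, f, hm, hk, hf, rfl⟩, -⟩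
  · have hm1 : (1 : ℝ) ≤ m := by exact_mod_cast hm
    have := hnn f hf
    apply div_nonneg <;> linarith
  · have hm1 : (1 : ℝ) ≤ m := by exact_mod_cast hm
    have h1 := hnn f hf
    have h2 : 0 ≤ (k : ℝ) * c := by positivity
    apply div_nonneg <;> linarith

lemma key_lemma (I : Set ℝ) (hI : I ⊆ Set.Icc 0 1) (c : ℝ) (hc : 0 ≤ c) (f : ℝ)
    (hf : f ∈ AddSubmonoid.closure (Dset I ∪ Dc c I)) :
    0 ≤ f ∧ ((∃ (m' : ℕ) (F : ℝ) (K : ℕ), 0 < m' ∧ F ∈ AddSubmonoid.closure I ∧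
      f = (((m' : ℝ) - 1 + F + (K : ℝ) * c) / m')) ∨ 1 ≤ f) := by
  induction hf using AddSubmonoid.closure_induction with
  | mem y hy =>
    refine ⟨mem_DJ_nonneg hI hc hy, Or.inl ?_⟩
    have hIp : ∀ g ∈ Iplus I, g ∈ AddSubmonoid.closure I := by
      intro g hg; rw [iplus_eq] at hg; exact hg.1
    rcases hy with ⟨⟨m, g, hm, hg, rfl⟩, -⟩ | ⟨⟨m, k, g, hm, hk, hg, rfl⟩, -⟩
    · exact ⟨m, g, 0, hm, hIp g hg, by push_cast; ring⟩
    · exact ⟨m, g, k, hm, hIp g hg, rfl⟩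
  | zero =>
    exact ⟨le_refl 0, Or.inl ⟨1, 0, 0, one_pos, AddSubmonoid.zero_mem _, by norm_num⟩⟩
  | add a b _ _ ha hb =>
    obtain ⟨ha0, ha'⟩ := ha
    obtain ⟨hb0, hb'⟩ := hb
    refine ⟨add_nonneg ha0 hb0, ?_⟩
    rcases ha' with ⟨m₁, F₁, K₁, hm₁, hF₁, rfl⟩ | ha1
    rcases hb' with ⟨m₂, F₂, K₂, hm₂, hF₂, rfl⟩ | hb1
    · -- both structured
      have hF₁0 : 0 ≤ F₁ := closure_nonneg (fun y hy => (hI hy).1) hF₁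
      have hF₂0 : 0 ≤ F₂ := closure_nonneg (fun y hy => (hI hy).1) hF₂
      have hK₁0 : 0 ≤ (K₁ : ℝ) * c := by positivity
      have hK₂0 : 0 ≤ (K₂ : ℝ) * c := by positivity
      rcases Nat.lt_or_ge m₁ 2 with h₁ | h₁
      · -- m₁ = 1
        have hm₁1 : m₁ = 1 := by omega
        subst hm₁1
        refine Or.inl ⟨m₂, F₂ + m₂ • F₁, K₂ + m₂ * K₁, hm₂,
          AddSubmonoid.add_mem _ hF₂ (AddSubmonoid.nsmul_mem _ hF₁ m₂), ?_⟩
        have hm₂0 : (0 : ℝ) < m₂ := by exact_mod_cast hm₂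
        rw [nsmul_eq_mul]
        field_simp
        push_cast
        ring
      rcases Nat.lt_or_ge m₂ 2 with h₂ | h₂
      · -- m₂ = 1
        have hm₂1 : m₂ = 1 := by omega
        subst hm₂1
        refine Or.inl ⟨m₁, F₁ + m₁ • F₂, K₁ + m₁ * K₂, hm₁,
          AddSubmonoid.add_mem _ hF₁ (AddSubmonoid.nsmul_mem _ hF₂ m₁), ?_⟩
        have hm₁0 : (0 : ℝ) < m₁ := by exact_mod_cast hm₁
        rw [nsmul_eq_mul]
        field_simp
        push_cast
        ring
      · -- both ≥ 2: each ≥ 1/2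
        refine Or.inr ?_
        have h₁' : (2 : ℝ) ≤ m₁ := by exact_mod_cast h₁
        have h₂' : (2 : ℝ) ≤ m₂ := by exact_mod_cast h₂
        have e₁ : (1 : ℝ) / 2 ≤ ((m₁ : ℝ) - 1 + F₁ + (K₁ : ℝ) * c) / m₁ := by
          rw [div_le_div_iff₀ (by norm_num) (by linarith)]
          linarith
        have e₂ : (1 : ℝ) / 2 ≤ ((m₂ : ℝ) - 1 + F₂ + (K₂ : ℝ) * c) / m₂ := by
          rw [div_le_div_iff₀ (by norm_num) (by linarith)]
          linarith
        linarith
    · exact Or.inr (by linarith)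
    · exact Or.inr (by linarith)

theorem D_of_union (I : Set ℝ) (hI : I ⊆ Set.Icc 0 1) (c : ℝ) (hc : 0 ≤ c) :
    Dset (Dset I ∪ Dc c I) ⊆ Dset I ∪ Dc c I ∪ {1} := by
  rintro x ⟨⟨m, f, hm, hf, rfl⟩, hx1⟩
  have hm0 : (0 : ℝ) < m := by exact_mod_cast hm
  have hf' : f ∈ AddSubmonoid.closure (Dset I ∪ Dc c I) := by
    rw [iplus_eq] at hf; exact hf.1
  have hf1 : f ≤ 1 := by rw [iplus_eq] at hf; exact hf.2
  obtain ⟨hf0, hQ | h1⟩ := key_lemma I hI c hc f hf'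
  · obtain ⟨m', F, K, hm', hF, rfl⟩ := hQ
    have hm'0 : (0 : ℝ) < m' := by exact_mod_cast hm'
    have hF0 : 0 ≤ F := closure_nonneg (fun y hy => (hI hy).1) hF
    have hKc : 0 ≤ (K : ℝ) * c := by positivity
    have hF1 : F ≤ 1 := by
      rw [div_le_one hm'0] at hf1
      linarith
    have hFmem : F ∈ Iplus I := by rw [iplus_eq]; exact ⟨hF, hF1⟩
    have heq : ((m : ℝ) - 1 + (((m' : ℝ) - 1 + F + (K : ℝ) * c) / m')) / m
        = (((m * m' : ℕ) : ℝ) - 1 + F + (K : ℝ) * c) / ((m * m' : ℕ) : ℝ) := by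
      push_cast
      field_simp
      ring
    rcases Nat.eq_zero_or_pos K with rfl | hK
    · refine Or.inl (Or.inl ⟨⟨m * m', F, Nat.mul_pos hm hm', hFmem, ?_⟩, hx1⟩)
      rw [heq]; push_cast; ring
    · exact Or.inl (Or.inr ⟨⟨m * m', K, F, Nat.mul_pos hm hm', hK, hFmem, heq⟩, hx1⟩)
  · have : f = 1 := le_antisymm hf1 h1
    subst this
    right
    show ((m : ℝ) - 1 + 1) / m = 1
    field_simp
    ring
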